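/- Let K, t, α, β, δ be natural numbers with 1 ≤ β ≤ α, t + α ≤ K, and δ·(t+β) = t+α, and fix a user k ∈ [K]. Then the number of triples (S, 𝒫, T), where S ⊆ [K] with |S| = t+α, 𝒫 is a partition of S into δ pairwise disjoint blocks each of cardinality t+β, and T ⊆ S with |T| = t+1, k ∈ T, and T contained in some block of 𝒫, equals C(K−1, t) · Γ, where Γ = C(K−t−1, α−1)·(α−1)!/((δ−1)!·(β−1)!·((t+β)!)^{δ−1}). (Hence over the whole delivery algorithm user k receives exactly C(K−1,t)·Γ coded mini-files, i.e., all Γ mini-files of each of its C(K−1,t) missing coded subfiles.) -/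

import Mathlib

open Nat
open Finset


def myparts (b : ℕ) (Y : Finset ℕ) : Finset (Finset (Finset ℕ)) :=
  Y.powerset.powerset.filter (fun P => (∀ B ∈ P, B.card = b) ∧
    (∀ B ∈ P, ∀ B' ∈ P, B ≠ B' → Disjoint B B') ∧ P.sup id = Y)

lemma mem_myparts {b : ℕ} {Y : Finset ℕ} {P : Finset (Finset ℕ)} :
    P ∈ myparts b Y ↔ (∀ B ∈ P, B.card = b) ∧
      (∀ B ∈ P, ∀ B' ∈ P, B ≠ B' → Disjoint B B') ∧ P.sup id = Y := by
  unfold myparts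
  simp only [mem_filter, mem_powerset]
  constructor
  · exact fun h => h.2
  · intro h
    exact ⟨fun B hB => mem_powerset.mpr (h.2.2 ▸ Finset.le_sup (f := id) hB), h⟩

lemma blocks_subset {b : ℕ} {Y : Finset ℕ} {P : Finset (Finset ℕ)} {B : Finset ℕ}
    (hP : P ∈ myparts b Y) (hB : B ∈ P) : B ⊆ Y :=
  (mem_myparts.mp hP).2.2 ▸ Finset.le_sup (f := id) hB

lemma filter_mem_eq_singleton {P : Finset (Finset ℕ)} {B : Finset ℕ} {a : ℕ}
    (hdisj : ∀ B ∈ P, ∀ B' ∈ P, B ≠ B' → Disjoint B B') (hB : B ∈ P) (ha : a ∈ B) :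
    P.filter (fun B' => a ∈ B') = {B} := by
  ext B'
  simp only [mem_filter, mem_singleton]
  constructor
  · rintro ⟨hB', ha'⟩
    by_contra hne
    exact (Finset.disjoint_left.mp (hdisj B' hB' B hB hne) ha') ha
  · rintro rfl
    exact ⟨hB, ha⟩

def blockAt (a : ℕ) (P : Finset (Finset ℕ)) : Finset ℕ :=
  (P.filter (fun B => a ∈ B)).sup id

lemma blockAt_eq {P : Finset (Finset ℕ)} {B : Finset ℕ} {a : ℕ}
    (hdisj : ∀ B ∈ P, ∀ B' ∈ P, B ≠ B' → Disjoint B B') (hB : B ∈ P) (ha : a ∈ B) :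
    blockAt a P = B := by
  unfold blockAt
  rw [filter_mem_eq_singleton hdisj hB ha]
  simp

lemma fin_union_sdiff_cancel {s t : Finset ℕ} (h : Disjoint s t) : (s ∪ t) \ s = t := by
  ext x
  simp only [mem_sdiff, mem_union]
  constructor
  · rintro ⟨h1 | h1, h2⟩
    · exact absurd h1 h2
    · exact h1
  · intro hx
    exact ⟨Or.inr hx, fun hs => Finset.disjoint_left.mp h hs hx⟩

lemma erase_mem_myparts {b : ℕ} {Y : Finset ℕ} {P : Finset (Finset ℕ)} {B : Finset ℕ}
    (hP : P ∈ myparts b Y) (hB : B ∈ P) : P.erase B ∈ myparts b (Y \ B) := by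
  obtain ⟨hcard, hdisj, hsup⟩ := mem_myparts.mp hP
  rw [mem_myparts]
  refine ⟨fun B' hB' => hcard B' (mem_of_mem_erase hB'),
    fun B1 h1 B2 h2 hne => hdisj _ (mem_of_mem_erase h1) _ (mem_of_mem_erase h2) hne, ?_⟩
  have hU : Disjoint B ((P.erase B).sup id) := by
    rw [Finset.disjoint_sup_right]
    intro B' hB'
    exact hdisj B hB B' (mem_of_mem_erase hB') (Ne.symm (ne_of_mem_erase hB'))
  have hsplit : Y = B ∪ (P.erase B).sup id := by
    rw [← hsup]
    conv_lhs => rw [← insert_erase hB]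
    rw [sup_insert]
    rfl
  rw [hsplit, fin_union_sdiff_cancel hU]

lemma insert_mem_myparts {b : ℕ} {S' B : Finset ℕ} {Q : Finset (Finset ℕ)}
    (hQ : Q ∈ myparts b S') (hd : Disjoint B S') (hBcard : B.card = b) :
    insert B Q ∈ myparts b (B ∪ S') := by
  obtain ⟨hcard, hdisj, hsup⟩ := mem_myparts.mp hQ
  have hblocks : ∀ B' ∈ Q, B' ⊆ S' := fun B' h => hsup ▸ Finset.le_sup (f := id) h
  rw [mem_myparts]
  refine ⟨?_, ?_, ?_⟩
  · intro B' hB'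
    rcases mem_insert.mp hB' with rfl | h
    · exact hBcard
    · exact hcard _ h
  · intro B1 h1 B2 h2 hne
    rw [mem_insert] at h1 h2
    rcases h1 with rfl | h1
    · rcases h2 with rfl | h2
      · exact absurd rfl hne
      · exact hd.mono_right (hblocks _ h2)
    · rcases h2 with rfl | h2
      · exact (hd.mono_right (hblocks _ h1)).symm
      · exact hdisj _ h1 _ h2 hne
  · rw [sup_insert, hsup]
    rfl

lemma not_mem_of_disjoint {b : ℕ} {S' B : Finset ℕ} {Q : Finset (Finset ℕ)}
    (hQ : Q ∈ myparts b S') (hd : Disjoint B S') (hb : 1 ≤ b) (hBcard : B.card = b) :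
    B ∉ Q := by
  intro hB
  have hsub : B ⊆ S' := blocks_subset hQ hB
  have hBB : Disjoint B B := hd.mono_right hsub
  rw [disjoint_self] at hBB
  rw [hBB] at hBcard
  simp at hBcard
  omega

lemma myparts_empty {b : ℕ} (hb : 1 ≤ b) : myparts b ∅ = {∅} := by
  ext P
  rw [mem_myparts, mem_singleton]
  constructor
  · rintro ⟨hcard, -, hsup⟩
    rw [Finset.eq_empty_iff_forall_notMem]
    intro B hB
    have h1 : B ⊆ ∅ := hsup ▸ Finset.le_sup (f := id) hB
    have h2 := hcard B hB
    rw [Finset.subset_empty] at h1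
    subst h1
    simp at h2
    omega
  · rintro rfl
    exact ⟨by simp, by simp, rfl⟩

lemma myparts_card (m b : ℕ) (hb : 1 ≤ b) :
    ∀ Y : Finset ℕ, Y.card = m * b →
      (myparts b Y).card * (m ! * (b !) ^ m) = (m * b)! := by
  induction m with
  | zero =>
    intro Y hY
    have hY0 : Y = ∅ := Finset.card_eq_zero.mp (by simpa using hY)
    rw [hY0, myparts_empty hb]
    simp
  | succ m ih =>
    intro Y hY
    have hne : Y.Nonempty := card_pos.mp (by rw [hY]; exact Nat.mul_pos (Nat.succ_pos m) hb)
    obtain ⟨a, ha⟩ := hne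
    classical
    set cand := Y.powerset.filter (fun B => a ∈ B ∧ B.card = b) with hcand
    have hcandmem : ∀ B ∈ cand, B ⊆ Y ∧ a ∈ B ∧ B.card = b := by
      intro B hB
      simpa [hcand, mem_filter, mem_powerset] using hB
    have hmap : ∀ P ∈ myparts b Y, blockAt a P ∈ cand := by
      intro P hP
      obtain ⟨hcard, hdisj, hsup⟩ := mem_myparts.mp hP
      obtain ⟨B, hB, haB⟩ := Finset.mem_sup.mp (show a ∈ P.sup id by rw [hsup]; exact ha)
      rw [blockAt_eq hdisj hB haB]
      simp only [hcand, mem_filter, mem_powerset]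
      exact ⟨blocks_subset hP hB, haB, hcard B hB⟩
    have hBmemP : ∀ B, ∀ P ∈ (myparts b Y).filter (fun P => blockAt a P = B), B ∈ P := by
      intro B P hP
      rw [mem_filter] at hP
      obtain ⟨hP, hblk⟩ := hP
      obtain ⟨hcard, hdisj, hsup⟩ := mem_myparts.mp hP
      obtain ⟨B', hB', haB'⟩ := Finset.mem_sup.mp (show a ∈ P.sup id by rw [hsup]; exact ha)
      rw [blockAt_eq hdisj hB' haB'] at hblk
      rwa [← hblk]
    have hsum := Finset.card_eq_sum_card_fiberwise hmap
    have hfib : ∀ B ∈ cand, ((myparts b Y).filter (fun P => blockAt a P = B)).card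
        = (myparts b (Y \ B)).card := by
      intro B hBc
      obtain ⟨hBY, haB, hBcard⟩ := hcandmem B hBc
      refine Finset.card_bij' (fun P _ => P.erase B) (fun Q _ => insert B Q) ?_ ?_ ?_ ?_
      · intro P hP
        exact erase_mem_myparts (mem_filter.mp hP).1 (hBmemP B P hP)
      · intro Q hQ
        have h1 := insert_mem_myparts hQ Finset.disjoint_sdiff hBcard
        rw [Finset.union_sdiff_of_subset hBY] at h1
        rw [mem_filter]
        exact ⟨h1, blockAt_eq (mem_myparts.mp h1).2.1 (mem_insert_self _ _) haB⟩
      · intro P hP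
        exact insert_erase (hBmemP B P hP)
      · intro Q hQ
        exact erase_insert (not_mem_of_disjoint hQ Finset.disjoint_sdiff hb hBcard)
    have hDpos : 0 < m ! * b ! ^ m := by positivity
    have hfibval : ∀ B ∈ cand, (myparts b (Y \ B)).card = (m * b)! / (m ! * b ! ^ m) := by
      intro B hBc
      obtain ⟨hBY, haB, hBcard⟩ := hcandmem B hBc
      have hc : (Y \ B).card = m * b := by
        rw [card_sdiff_of_subset hBY, hY, hBcard]
        have h : (m + 1) * b = m * b + b := by ring
        omega
      exact (Nat.div_eq_of_eq_mul_left hDpos (ih _ hc).symm).symm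
    have hcandcard : cand.card = ((m + 1) * b - 1).choose (b - 1) := by
      have h1 : cand.card = ((Y.erase a).powersetCard (b - 1)).card := by
        refine Finset.card_bij' (fun B _ => B.erase a) (fun A _ => insert a A) ?_ ?_ ?_ ?_
        · intro B hB
          obtain ⟨hBY, haB, hBcard⟩ := hcandmem B hB
          rw [mem_powersetCard]
          exact ⟨erase_subset_erase a hBY, by rw [card_erase_of_mem haB, hBcard]⟩
        · intro A hA
          rw [mem_powersetCard] at hA
          obtain ⟨hAY, hAcard⟩ := hA
          have haA : a ∉ A := fun h => (mem_erase.mp (hAY h)).1 rfl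
          simp only [hcand, mem_filter, mem_powerset]
          refine ⟨insert_subset ha (hAY.trans (erase_subset _ _)), mem_insert_self _ _, ?_⟩
          rw [card_insert_of_notMem haA, hAcard]
          omega
        · intro B hB
          exact insert_erase (hcandmem B hB).2.1
        · intro A hA
          rw [mem_powersetCard] at hA
          exact erase_insert (fun h => (mem_erase.mp (hA.1 h)).1 rfl)
      rw [h1, card_powersetCard, card_erase_of_mem ha, hY]
    have hDdvd : (m ! * b ! ^ m) ∣ (m * b)! := by
      have := ih (Finset.range (m * b)) (by simp)
      exact Dvd.intro_left _ this
    have harith : ((m + 1) * b - 1).choose (b - 1) * (m + 1) * b ! * (m * b)! = ((m + 1) * b)! := by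
      have hn : 0 < (m + 1) * b := Nat.mul_pos (Nat.succ_pos m) hb
      have hble : b ≤ (m + 1) * b := Nat.le_mul_of_pos_left b (Nat.succ_pos m)
      have hb1 : b - 1 ≤ (m + 1) * b - 1 := by omega
      have h1 := Nat.choose_mul_factorial_mul_factorial hb1
      have h2 : (m + 1) * b - 1 - (b - 1) = m * b := by
        have h : (m + 1) * b = m * b + b := by ring
        omega
      rw [h2] at h1
      have h3 : b ! = b * (b - 1)! := by
        conv_lhs => rw [show b = (b - 1) + 1 by omega]
        rw [Nat.factorial_succ]
        congr 1
        omega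
      calc ((m + 1) * b - 1).choose (b - 1) * (m + 1) * b ! * (m * b)!
          = (m + 1) * b * (((m + 1) * b - 1).choose (b - 1) * (b - 1)! * (m * b)!) := by
            rw [h3]; ring
        _ = (m + 1) * b * ((m + 1) * b - 1)! := by rw [h1]
        _ = ((m + 1) * b)! := Nat.mul_factorial_pred hn.ne'
    rw [hsum, Finset.sum_congr rfl (fun B hB => (hfib B hB).trans (hfibval B hB)),
      Finset.sum_const, smul_eq_mul, hcandcard]
    calc ((m + 1) * b - 1).choose (b - 1) * ((m * b)! / (m ! * b ! ^ m)) * ((m + 1)! * b ! ^ (m + 1))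
        = ((m + 1) * b - 1).choose (b - 1) * (m + 1) * b ! *
            ((m * b)! / (m ! * b ! ^ m) * (m ! * b ! ^ m)) := by
          rw [Nat.factorial_succ, pow_succ]; ring
      _ = ((m + 1) * b - 1).choose (b - 1) * (m + 1) * b ! * (m * b)! := by
          rw [Nat.div_mul_cancel hDdvd]
      _ = ((m + 1) * b)! := harith

/-- For a fixed user `k ∈ [K]`, the number of triples `(S, 𝒫, T)` — with `S ⊆ [K]`,
`|S| = t+α`, `𝒫` a partition of `S` into `δ` blocks of cardinality `t+β`, and `T ⊆ S`,
`|T| = t+1`, `k ∈ T`, `T` contained in some block of `𝒫` — equals `C(K−1, t) · Γ`, where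
`Γ = C(K−t−1, α−1)·(α−1)!/((δ−1)!·(β−1)!·((t+β)!)^{δ−1})`. -/
theorem stmt_7 (K t α β δ : ℕ) (hβ : 1 ≤ β) (hβα : β ≤ α) (hαK : t + α ≤ K)
    (hδ : δ * (t + β) = t + α)
    (k : ℕ) (hk : k ∈ Finset.Icc 1 K) :
    {q : Finset ℕ × Finset (Finset ℕ) × Finset ℕ |
        q.1 ⊆ Finset.Icc 1 K ∧ q.1.card = t + α ∧
        (∀ B ∈ q.2.1, B.card = t + β) ∧
        (∀ B ∈ q.2.1, ∀ B' ∈ q.2.1, B ≠ B' → Disjoint B B') ∧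
        q.2.1.sup id = q.1 ∧
        q.2.2 ⊆ q.1 ∧ q.2.2.card = t + 1 ∧ k ∈ q.2.2 ∧
        (∃ B ∈ q.2.1, q.2.2 ⊆ B)}.ncard =
      (K - 1).choose t *
        ((K - t - 1).choose (α - 1) * (α - 1)! /
          ((δ - 1)! * (β - 1)! * ((t + β)!) ^ (δ - 1))) := by
  classical
  set X := Finset.Icc 1 K with hX
  have hXcard : X.card = K := by rw [hX, Nat.card_Icc]; omega
  have hkX : k ∈ X := hk
  have hδpos : 1 ≤ δ := by
    rcases Nat.eq_zero_or_pos δ with h | h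
    · subst h; simp at hδ; omega
    · exact h
  have hδ1 : (δ - 1) * (t + β) = α - β := by
    have h1 : δ * (t + β) = (δ - 1) * (t + β) + (t + β) := by
      conv_lhs => rw [show δ = (δ - 1) + 1 by omega]
      ring
    omega
  set D := (δ - 1)! * ((t + β)!) ^ (δ - 1) with hD
  have hDpos : 0 < D := by positivity
  have hDdvd : D ∣ (α - β)! := by
    have h := myparts_card (δ - 1) (t + β) (by omega) (Finset.range ((δ - 1) * (t + β))) (by simp)
    rw [hδ1] at h
    exact Dvd.intro_left _ h
  have hpc : ∀ S' : Finset ℕ, S'.card = α - β → (myparts (t + β) S').card = (α - β)! / D := by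
    intro S' h
    have h2 := myparts_card (δ - 1) (t + β) (by omega) S' (by rw [h, hδ1])
    rw [hδ1] at h2
    exact (Nat.div_eq_of_eq_mul_left hDpos h2.symm).symm
  -- the Finset version of the set
  set F := ((X.powerset ×ˢ X.powerset.powerset ×ˢ X.powerset).filter
    (fun q : Finset ℕ × Finset (Finset ℕ) × Finset ℕ =>
      q.1 ⊆ X ∧ q.1.card = t + α ∧
      (∀ B ∈ q.2.1, B.card = t + β) ∧
      (∀ B ∈ q.2.1, ∀ B' ∈ q.2.1, B ≠ B' → Disjoint B B') ∧
      q.2.1.sup id = q.1 ∧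
      q.2.2 ⊆ q.1 ∧ q.2.2.card = t + 1 ∧ k ∈ q.2.2 ∧
      (∃ B ∈ q.2.1, q.2.2 ⊆ B))) with hF
  have hset : {q : Finset ℕ × Finset (Finset ℕ) × Finset ℕ |
        q.1 ⊆ Finset.Icc 1 K ∧ q.1.card = t + α ∧
        (∀ B ∈ q.2.1, B.card = t + β) ∧
        (∀ B ∈ q.2.1, ∀ B' ∈ q.2.1, B ≠ B' → Disjoint B B') ∧
        q.2.1.sup id = q.1 ∧
        q.2.2 ⊆ q.1 ∧ q.2.2.card = t + 1 ∧ k ∈ q.2.2 ∧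
        (∃ B ∈ q.2.1, q.2.2 ⊆ B)} = ↑F := by
    ext q
    simp only [hF, Finset.coe_filter, Set.mem_setOf_eq, Finset.mem_product, Finset.mem_powerset]
    constructor
    · intro h
      refine ⟨⟨h.1, ?_, h.2.2.2.2.2.1.trans h.1⟩, h⟩
      intro B hB
      exact Finset.mem_powerset.mpr ((h.2.2.2.2.1 ▸ Finset.le_sup (f := id) hB).trans h.1)
    · exact fun h => h.2
  rw [hset, Set.ncard_coe_finset]
  -- index Finsets
  set Tset := X.powerset.filter (fun T => k ∈ T ∧ T.card = t + 1) with hTset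
  have hTsetmem : ∀ T ∈ Tset, T ⊆ X ∧ k ∈ T ∧ T.card = t + 1 := by
    intro T hT
    simpa [hTset, Finset.mem_filter, Finset.mem_powerset] using hT
  have hTsetcard : Tset.card = (K - 1).choose t := by
    have h1 : Tset.card = ((X.erase k).powersetCard t).card := by
      refine Finset.card_bij' (fun T _ => T.erase k) (fun A _ => insert k A) ?_ ?_ ?_ ?_
      · intro T hT
        obtain ⟨hTX, hkT, hTc⟩ := hTsetmem T hT
        rw [Finset.mem_powersetCard]
        exact ⟨Finset.erase_subset_erase k hTX, by rw [Finset.card_erase_of_mem hkT, hTc]; omega⟩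
      · intro A hA
        rw [Finset.mem_powersetCard] at hA
        obtain ⟨hAX, hAc⟩ := hA
        have hkA : k ∉ A := fun h => (Finset.mem_erase.mp (hAX h)).1 rfl
        simp only [hTset, Finset.mem_filter, Finset.mem_powerset]
        refine ⟨Finset.insert_subset hkX (hAX.trans (Finset.erase_subset _ _)),
          Finset.mem_insert_self _ _, ?_⟩
        rw [Finset.card_insert_of_notMem hkA, hAc]
      · intro T hT
        exact Finset.insert_erase (hTsetmem T hT).2.1
      · intro A hA
        rw [Finset.mem_powersetCard] at hA
        exact Finset.erase_insert (fun h => (Finset.mem_erase.mp (hA.1 h)).1 rfl)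
    rw [h1, Finset.card_powersetCard, Finset.card_erase_of_mem hkX, hXcard]
  set J := Tset.sigma (fun T => ((X \ T).powersetCard (β - 1)).sigma
    (fun B' => ((X \ (T ∪ B')).powersetCard (α - β)).sigma
      (fun _S' => myparts (t + β) _S'))) with hJ
  -- facts about elements of F
  have hFfacts : ∀ q ∈ F, q.2.1 ∈ myparts (t + β) q.1 ∧ blockAt k q.2.1 ∈ q.2.1 ∧
      q.2.2 ⊆ blockAt k q.2.1 := by
    intro q hq
    rw [hF, Finset.mem_filter] at hq
    obtain ⟨-, hS, hScard, hPcard, hPdisj, hPsup, hTS, hTcard, hkT, B, hB, hTB⟩ := hq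
    have hb0 : blockAt k q.2.1 = B := blockAt_eq hPdisj hB (hTB hkT)
    rw [hb0]
    exact ⟨mem_myparts.mpr ⟨hPcard, hPdisj, hPsup⟩, hB, hTB⟩
  have hFJ : F.card = J.card := by
    refine Finset.card_bij'
      (fun q _ => ⟨q.2.2, blockAt k q.2.1 \ q.2.2, q.1 \ blockAt k q.2.1,
        q.2.1.erase (blockAt k q.2.1)⟩)
      (fun p _ => (p.1 ∪ p.2.1 ∪ p.2.2.1, insert (p.1 ∪ p.2.1) p.2.2.2, p.1)) ?_ ?_ ?_ ?_
    · -- forward membership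
      intro q hq
      obtain ⟨hP, hB0mem, hTB0⟩ := hFfacts q hq
      rw [hF, Finset.mem_filter] at hq
      obtain ⟨-, hS, hScard, hPcard, hPdisj, hPsup, hTS, hTcard, hkT, -⟩ := hq
      have hB0S : blockAt k q.2.1 ⊆ q.1 := blocks_subset hP hB0mem
      have hB0card : (blockAt k q.2.1).card = t + β := hPcard _ hB0mem
      simp only [hJ, Finset.mem_sigma]
      refine ⟨?_, ?_, ?_, ?_⟩
      · simp only [hTset, Finset.mem_filter, Finset.mem_powerset]
        exact ⟨hTS.trans hS, hkT, hTcard⟩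
      · rw [Finset.mem_powersetCard]
        constructor
        · exact Finset.sdiff_subset_sdiff (hB0S.trans hS) (Finset.Subset.refl _)
        · rw [Finset.card_sdiff_of_subset hTB0, hB0card, hTcard]
          omega
      · rw [Finset.union_sdiff_of_subset hTB0, Finset.mem_powersetCard]
        constructor
        · exact Finset.sdiff_subset_sdiff hS (Finset.Subset.refl _)
        · rw [Finset.card_sdiff_of_subset hB0S, hScard, hB0card]
          omega
      · exact erase_mem_myparts hP hB0mem
    · -- backward membership
      intro p hp
      simp only [hJ, Finset.mem_sigma] at hp
      obtain ⟨hT, hB', hS', hQ⟩ := hp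
      obtain ⟨hTX, hkT, hTcard⟩ := hTsetmem p.1 hT
      rw [Finset.mem_powersetCard] at hB' hS'
      obtain ⟨hB'sub, hB'card⟩ := hB'
      obtain ⟨hS'sub, hS'card⟩ := hS'
      obtain ⟨hB'X, hB'T⟩ := Finset.subset_sdiff.mp hB'sub
      obtain ⟨hS'X, hS'TB⟩ := Finset.subset_sdiff.mp hS'sub
      have hB0card : (p.1 ∪ p.2.1).card = t + β := by
        rw [Finset.card_union_of_disjoint hB'T.symm, hTcard, hB'card]
        omega
      have hP' := insert_mem_myparts hQ hS'TB.symm hB0card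
      rw [hF, Finset.mem_filter]
      have hSX : p.1 ∪ p.2.1 ∪ p.2.2.1 ⊆ X :=
        Finset.union_subset (Finset.union_subset hTX hB'X) hS'X
      have hScard : (p.1 ∪ p.2.1 ∪ p.2.2.1).card = t + α := by
        rw [Finset.card_union_of_disjoint hS'TB.symm, hB0card, hS'card]
        omega
      obtain ⟨hcards, hdisj, hsup⟩ := mem_myparts.mp hP'
      refine ⟨?_, hSX, hScard, hcards, hdisj, hsup, ?_, hTcard, hkT, ?_⟩
      · rw [Finset.mem_product, Finset.mem_product]
        refine ⟨Finset.mem_powerset.mpr hSX, ?_, Finset.mem_powerset.mpr hTX⟩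
        rw [Finset.mem_powerset]
        intro B hB
        exact Finset.mem_powerset.mpr ((hsup ▸ Finset.le_sup (f := id) hB).trans hSX)
      · exact (Finset.subset_union_left).trans Finset.subset_union_left
      · exact ⟨p.1 ∪ p.2.1, Finset.mem_insert_self _ _, Finset.subset_union_left⟩
    · -- left inverse
      intro q hq
      obtain ⟨hP, hB0mem, hTB0⟩ := hFfacts q hq
      rw [hF, Finset.mem_filter] at hq
      have hB0S : blockAt k q.2.1 ⊆ q.1 := blocks_subset hP hB0mem
      show (_, _, _) = q
      rw [Finset.union_sdiff_of_subset hTB0, Finset.union_sdiff_of_subset hB0S,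
        Finset.insert_erase hB0mem]
    · -- right inverse
      intro p hp
      simp only [hJ, Finset.mem_sigma] at hp
      obtain ⟨hT, hB', hS', hQ⟩ := hp
      obtain ⟨hTX, hkT, hTcard⟩ := hTsetmem p.1 hT
      rw [Finset.mem_powersetCard] at hB' hS'
      obtain ⟨hB'sub, hB'card⟩ := hB'
      obtain ⟨hS'sub, hS'card⟩ := hS'
      obtain ⟨hB'X, hB'T⟩ := Finset.subset_sdiff.mp hB'sub
      obtain ⟨hS'X, hS'TB⟩ := Finset.subset_sdiff.mp hS'sub
      have hB0card : (p.1 ∪ p.2.1).card = t + β := by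
        rw [Finset.card_union_of_disjoint hB'T.symm, hTcard, hB'card]
        omega
      have hP' := insert_mem_myparts hQ hS'TB.symm hB0card
      have hbA : blockAt k (insert (p.1 ∪ p.2.1) p.2.2.2) = p.1 ∪ p.2.1 :=
        blockAt_eq (mem_myparts.mp hP').2.1 (Finset.mem_insert_self _ _)
          (Finset.mem_union_left _ hkT)
      show (⟨p.1, _, _, _⟩ : (_ : Finset ℕ) × (_ : Finset ℕ) × (_ : Finset ℕ) ×
        Finset (Finset ℕ)) = p
      rw [hbA, fin_union_sdiff_cancel hB'T.symm, fin_union_sdiff_cancel hS'TB.symm,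
        Finset.erase_insert (not_mem_of_disjoint hQ hS'TB.symm (by omega) hB0card)]
  rw [hFJ]
  -- compute J.card
  have hJcard : J.card = (K - 1).choose t * ((K - t - 1).choose (β - 1) *
      ((K - t - β).choose (α - β) * ((α - β)! / D))) := by
    rw [hJ, Finset.card_sigma]
    have inner : ∀ T ∈ Tset,
        (((X \ T).powersetCard (β - 1)).sigma (fun B' =>
          ((X \ (T ∪ B')).powersetCard (α - β)).sigma (fun _S' => myparts (t + β) _S'))).card
        = (K - t - 1).choose (β - 1) * ((K - t - β).choose (α - β) * ((α - β)! / D)) := by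
      intro T hT
      obtain ⟨hTX, hkT, hTcard⟩ := hTsetmem T hT
      rw [Finset.card_sigma]
      have inner2 : ∀ B' ∈ (X \ T).powersetCard (β - 1),
          (((X \ (T ∪ B')).powersetCard (α - β)).sigma (fun _S' => myparts (t + β) _S')).card
          = (K - t - β).choose (α - β) * ((α - β)! / D) := by
        intro B' hB'
        rw [Finset.mem_powersetCard] at hB'
        obtain ⟨hB'sub, hB'card⟩ := hB'
        obtain ⟨hB'X, hB'T⟩ := Finset.subset_sdiff.mp hB'sub
        rw [Finset.card_sigma]
        rw [Finset.sum_congr rfl (fun S' hS' =>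
          hpc S' (Finset.mem_powersetCard.mp hS').2), Finset.sum_const, smul_eq_mul,
          Finset.card_powersetCard]
        congr 2
        rw [Finset.card_sdiff_of_subset (Finset.union_subset hTX hB'X), hXcard,
          Finset.card_union_of_disjoint hB'T.symm, hTcard, hB'card]
        omega
      rw [Finset.sum_congr rfl inner2, Finset.sum_const, smul_eq_mul, Finset.card_powersetCard]
      congr 2
      rw [Finset.card_sdiff_of_subset hTX, hXcard, hTcard]
      omega
    rw [Finset.sum_congr rfl inner, Finset.sum_const, smul_eq_mul, hTsetcard]
  rw [hJcard]
  congr 1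
  -- arithmetic identity
  obtain ⟨e, he⟩ := hDdvd
  have hc2 : α - 1 ≤ K - t - 1 := by omega
  have hc1 : β - 1 ≤ α - 1 := by omega
  have h1 := Nat.choose_mul_factorial_mul_factorial hc2
  have h2 := Nat.choose_mul_factorial_mul_factorial (hc1.trans hc2)
  have hc3 : α - 1 - (β - 1) ≤ K - t - 1 - (β - 1) := Nat.sub_le_sub_right hc2 _
  have h3 := Nat.choose_mul_factorial_mul_factorial hc3
  have e1 : K - t - 1 - (β - 1) = K - t - β := by omega
  have e2 : α - 1 - (β - 1) = α - β := by omega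
  have e3 : K - t - β - (α - β) = K - t - 1 - (α - 1) := by omega
  rw [e1] at h2
  rw [e1, e2, e3] at h3
  have hbig : (K - t - 1).choose (β - 1) * (β - 1)! *
      ((K - t - β).choose (α - β) * (α - β)!) = (K - t - 1).choose (α - 1) * (α - 1)! := by
    have hpos : 0 < (K - t - 1 - (α - 1))! := Nat.factorial_pos _
    apply Nat.eq_of_mul_eq_mul_right hpos
    calc (K - t - 1).choose (β - 1) * (β - 1)! *
          ((K - t - β).choose (α - β) * (α - β)!) * (K - t - 1 - (α - 1))!
        = (K - t - 1).choose (β - 1) * (β - 1)! *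
            ((K - t - β).choose (α - β) * (α - β)! * (K - t - 1 - (α - 1))!) := by ring
      _ = (K - t - 1).choose (β - 1) * (β - 1)! * (K - t - β)! := by rw [h3]
      _ = (K - t - 1)! := h2
      _ = (K - t - 1).choose (α - 1) * (α - 1)! * (K - t - 1 - (α - 1))! := h1.symm
  have hden : (δ - 1)! * (β - 1)! * ((t + β)!) ^ (δ - 1) = (β - 1)! * D := by
    rw [hD]; ring
  rw [he, Nat.mul_div_cancel_left e hDpos, hden]
  symm
  apply Nat.div_eq_of_eq_mul_left (by positivity)
  calc (K - t - 1).choose (α - 1) * (α - 1)!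
      = (K - t - 1).choose (β - 1) * (β - 1)! * ((K - t - β).choose (α - β) * (α - β)!) :=
        hbig.symm
    _ = (K - t - 1).choose (β - 1) * (β - 1)! * ((K - t - β).choose (α - β) * (D * e)) := by
        rw [he]
    _ = (K - t - 1).choose (β - 1) * ((K - t - β).choose (α - β) * e) * ((β - 1)! * D) := by
        ring
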